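/- Let α be a finite type, let g : α → α → Bool be regular with respect to a subgroup S of Equiv.Perm α × Equiv.Perm α, let m be the cardinality of S and fix an enumeration e : Fin m ≃ S. Fix n and a, b, a', b' : Fin n → α. If g (a i) (b i) = g (a' i) (b' i) for every index i, then the sets { Unfold(a,b)(I) : I ∈ (Fin n → Fin m) } and { Unfold(a',b')(I) : I ∈ (Fin n → Fin m) } are equal. -/
import Mathlib


/-- A bipartite Boolean function `g` is regular with respect to a subgroup `S` of
`Equiv.Perm α × Equiv.Perm α` if the coordinatewise action of `S` preserves `g` and `S`
acts simply transitively on each fiber of `g`. -/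
def IsRegularGadget {α : Type*} (g : α → α → Bool)
    (S : Subgroup (Equiv.Perm α × Equiv.Perm α)) : Prop :=
  (∀ s ∈ S, ∀ x y : α, g (s.1 x) (s.2 y) = g x y) ∧
  (∀ x₁ y₁ x₂ y₂ : α, g x₁ y₁ = g x₂ y₂ →
    ∃! s : S, ((s : Equiv.Perm α × Equiv.Perm α).1 x₁,
               (s : Equiv.Perm α × Equiv.Perm α).2 y₁) = (x₂, y₂))

/-- The `Unfold` map: given an enumeration `e : Fin m ≃ S` of the symmetry group and an
input `(a, b)` to `g^n`, it sends an index tuple `I : Fin n → Fin m` to the input to `g^n`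
obtained by applying the `I i`-th symmetry in the `i`-th coordinate. -/
def Unfold {α : Type*} {S : Subgroup (Equiv.Perm α × Equiv.Perm α)} {m n : ℕ}
    (e : Fin m ≃ S) (a b : Fin n → α) (I : Fin n → Fin m) :
    (Fin n → α) × (Fin n → α) :=
  (fun i => (e (I i) : Equiv.Perm α × Equiv.Perm α).1 (a i),
   fun i => (e (I i) : Equiv.Perm α × Equiv.Perm α).2 (b i))

theorem unfold_subset {α : Type*}
    (g : α → α → Bool) (S : Subgroup (Equiv.Perm α × Equiv.Perm α))
    (hreg : IsRegularGadget g S) {m n : ℕ} (e : Fin m ≃ S) (a b a' b' : Fin n → α)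
    (h : ∀ i, g (a i) (b i) = g (a' i) (b' i)) :
    Set.range (Unfold e a b) ⊆ Set.range (Unfold e a' b') := by
  rintro _ ⟨I, rfl⟩
  choose t ht _ using fun i => hreg.2 (a' i) (b' i) (a i) (b i) (h i).symm
  refine ⟨fun i => e.symm (e (I i) * t i), ?_⟩
  unfold Unfold
  ext i <;> simp only [Equiv.apply_symm_apply] <;>
    [have := congrArg Prod.fst (ht i); have := congrArg Prod.snd (ht i)] <;>
    simp_all [Submonoid.coe_mul]

/-- Claim (iv): if `(a, b)` and `(a', b')` encode the same string, then the sets of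
values of `Unfold (a, b)` and `Unfold (a', b')` coincide. -/
theorem unfold_eq {α : Type*} [Fintype α]
    (g : α → α → Bool) (S : Subgroup (Equiv.Perm α × Equiv.Perm α))
    (hreg : IsRegularGadget g S) {m n : ℕ} (e : Fin m ≃ S) (a b a' b' : Fin n → α)
    (h : ∀ i, g (a i) (b i) = g (a' i) (b' i)) :
    Set.range (Unfold e a b) = Set.range (Unfold e a' b') := by
  exact subset_antisymm (unfold_subset g S hreg e a b a' b' h)
    (unfold_subset g S hreg e a' b' a b (fun i => (h i).symm))
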